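/- Let φ ∈ 𝒫 with expansion data j_∞, j_0, (a_n^{(j)}), (b_n^{(j)}). Then φ is absolutely integrable on (0,∞) (with respect to Lebesgue measure) if and only if a_0^{(j)} = 0 for all 0 ≤ j ≤ j_∞ and b_0^{(j)} = 0 for all 1 ≤ j ≤ j_0. -/

import Mathlib

set_option maxHeartbeats 1000000

/-- A sequence of complex numbers has polynomial growth. -/
def PolyGrowth (c : ℕ → ℂ) : Prop :=
  ∃ (C : ℝ) (k : ℕ), 0 < C ∧ ∀ n : ℕ, ‖c n‖ ≤ C * (1 + n) ^ k

/-- The expansion `Σ_{j=0}^{J} y^j Σ_{n=0}^∞ a_n^{(j)} e^{-2πny/N}`. -/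
noncomputable def expSum (N : ℕ) (J : ℕ) (a : ℕ → ℕ → ℂ) (y : ℝ) : ℂ :=
  ∑ j ∈ Finset.range (J + 1),
    (y : ℂ) ^ j * ∑' n : ℕ, a j n * (Real.exp (-(2 * Real.pi * n * y / N)) : ℂ)

/-- Membership in the class `𝒫` of functions on `(0,∞)` (Definition 6.3 of the paper):
`φ(y)` and `φ(1/y)` both admit absolutely convergent expansions
`Σ_{j} y^j Σ_{n≥0} c_n^{(j)} e^{-2πny/N}` with coefficients of polynomial growth. -/
def MemP (N : ℕ) (φ : ℝ → ℂ) : Prop :=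
  ∃ (jI j0 : ℕ) (a b : ℕ → ℕ → ℂ),
    (∀ j, PolyGrowth (a j)) ∧ (∀ j, PolyGrowth (b j)) ∧
    (∀ y : ℝ, 0 < y →
      (∀ j, Summable fun n : ℕ => ‖a j n‖ * Real.exp (-(2 * Real.pi * n * y / N))) ∧
      (∀ j, Summable fun n : ℕ => ‖b j n‖ * Real.exp (-(2 * Real.pi * n * y / N))) ∧
      φ y = expSum N jI a y ∧ φ (1 / y) = expSum N j0 b y)

open MeasureTheory Set Filter
open scoped Topology Pointwise

section Aux

lemma not_int_inv {M : ℝ} (hM : 1 ≤ M) :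
    ¬ IntegrableOn (fun x : ℝ => x⁻¹) (Ioi M) := by
  intro h
  have h2 : IntegrableOn (fun x : ℝ => x ^ (-1 : ℝ)) (Ioi M) :=
    h.congr_fun (fun x _ => (Real.rpow_neg_one x).symm) measurableSet_Ioi
  rw [integrableOn_Ioi_rpow_iff (lt_of_lt_of_le one_pos hM)] at h2
  norm_num at h2

lemma laurent_zero :
    ∀ (J : ℕ) (c : ℕ → ℂ) (m : ℤ), -1 ≤ m →
      IntegrableOn (fun y : ℝ => ∑ j ∈ Finset.range J, c j * (y : ℂ) ^ ((j : ℤ) + m))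
        (Ioi 1) → ∀ j < J, c j = 0 := by
  intro J
  induction J with
  | zero => simp
  | succ J ih =>
    intro c m hm hint
    have htop : c J = 0 := by
      by_contra hc
      have hc0 : 0 < ‖c J‖ := norm_pos_iff.mpr hc
      set g : ℝ → ℂ := fun y => ∑ j ∈ Finset.range (J + 1), c j * (y : ℂ) ^ ((j : ℤ) + m)
        with hg
      have hlim : Tendsto (fun y : ℝ => g y / (y : ℂ) ^ ((J : ℤ) + m)) atTop (𝓝 (c J)) := by
        have h1 : Tendsto (fun y : ℝ =>
            ∑ j ∈ Finset.range (J + 1), c j * (y : ℂ) ^ ((j : ℤ) - (J : ℤ))) atTop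
            (𝓝 (∑ j ∈ Finset.range (J + 1), if j = J then c J else 0)) := by
          apply tendsto_finset_sum
          intro j hj
          rcases eq_or_ne j J with h | h
          · subst h
            simp only [if_pos rfl, sub_self]
            simpa using tendsto_const_nhds (x := c j) |>.congr (fun y => by simp)
          · simp only [if_neg h]
            have hjJ : (j : ℤ) - (J : ℤ) < 0 := by
              have h1 : j < J + 1 := Finset.mem_range.mp hj
              have h2 : j < J := lt_of_le_of_ne (Nat.lt_succ_iff.mp h1) h
              omega
            have hr : Tendsto (fun y : ℝ => y ^ ((j : ℤ) - (J : ℤ))) atTop (𝓝 0) :=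
              tendsto_zpow_atTop_zero hjJ
            have h3 : Tendsto (fun y : ℝ => ((y : ℂ) ^ ((j : ℤ) - (J : ℤ)))) atTop (𝓝 0) := by
              have := (Complex.continuous_ofReal.tendsto 0).comp hr
              simp only [Function.comp_def, Complex.ofReal_zpow] at this
              simpa using this
            simpa using h3.const_mul (c j)
        have h2 : (∑ j ∈ Finset.range (J + 1), if j = J then c J else 0) = c J := by simp
        rw [h2] at h1
        apply h1.congr'
        filter_upwards [eventually_gt_atTop (0 : ℝ)] with y hy
        have hy0 : (y : ℂ) ≠ 0 := by exact_mod_cast hy.ne'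
        rw [hg]
        simp only []
        rw [Finset.sum_div]
        apply Finset.sum_congr rfl
        intro j hj
        rw [mul_div_assoc, ← zpow_sub₀ hy0]
        congr 2
        ring
      have hev : ∀ᶠ y : ℝ in atTop, ‖c J‖ / 2 < ‖g y / (y : ℂ) ^ ((J : ℤ) + m)‖ :=
        hlim.norm.eventually_const_lt (by linarith)
      obtain ⟨M0, hM0⟩ := eventually_atTop.mp hev
      set M := max M0 1 with hMdef
      have hM1 : (1 : ℝ) ≤ M := le_max_right _ _
      have hbound : ∀ y : ℝ, y ∈ Ioi M → ‖c J‖ / 2 * y⁻¹ ≤ ‖g y‖ := by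
        intro y hy
        have hyM : M < y := hy
        have hy1 : (1 : ℝ) < y := lt_of_le_of_lt hM1 hyM
        have hy0 : (0 : ℝ) < y := lt_trans one_pos hy1
        have h3 := (hM0 y (le_of_lt (lt_of_le_of_lt (le_max_left _ _) hyM))).le
        have hnorm : ‖(y : ℂ) ^ ((J : ℤ) + m)‖ = y ^ ((J : ℤ) + m) := by
          rw [norm_zpow, Complex.norm_real, Real.norm_eq_abs, abs_of_pos hy0]
        have h4 : ‖g y‖ = ‖g y / (y : ℂ) ^ ((J : ℤ) + m)‖ * y ^ ((J : ℤ) + m) := by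
          rw [norm_div, hnorm, div_mul_cancel₀]
          positivity
        rw [h4]
        have h5 : y ^ (-1 : ℤ) ≤ y ^ ((J : ℤ) + m) := zpow_le_zpow_right₀ hy1.le (by omega)
        have h6 : y⁻¹ ≤ y ^ ((J : ℤ) + m) := by rwa [zpow_neg_one] at h5
        exact mul_le_mul h3 h6 (by positivity) (norm_nonneg _)
      have hgi : IntegrableOn g (Ioi M) := hint.mono_set (Ioi_subset_Ioi hM1)
      have hii : IntegrableOn (fun y : ℝ => y⁻¹) (Ioi M) := by
        apply (hgi.const_mul (((2 / ‖c J‖ : ℝ) : ℂ))).mono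
          measurable_inv.aestronglyMeasurable
        rw [ae_restrict_iff' measurableSet_Ioi]
        filter_upwards with y hy
        have hb := hbound y hy
        have hy0 : (0 : ℝ) < y := lt_of_le_of_lt (le_trans one_pos.le hM1) hy
        rw [norm_mul, Complex.norm_real, Real.norm_eq_abs, Real.norm_eq_abs,
          abs_of_pos (by positivity), abs_of_pos (by positivity : (0:ℝ) < 2 / ‖c J‖)]
        rw [div_mul_eq_mul_div, le_div_iff₀ hc0]
        nlinarith
      exact not_int_inv hM1 hii
    have hrest : ∀ j < J, c j = 0 := by
      apply ih c m hm
      apply hint.congr_fun ?_ measurableSet_Ioi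
      intro y hy
      simp only [Finset.sum_range_succ, htop, zero_mul, add_zero]
    intro j hj
    rcases Nat.lt_succ_iff_lt_or_eq.mp hj with h | h
    · exact hrest j h
    · exact h ▸ htop

lemma sumexp {c : ℕ → ℂ} (hc : PolyGrowth c) {r : ℝ} (hr : 0 < r) :
    Summable (fun n : ℕ => ‖c n‖ * Real.exp (-(r * n))) := by
  obtain ⟨C, k, hC, hb⟩ := hc
  set q : ℝ := Real.exp (-r) with hq
  have hq0 : 0 < q := Real.exp_pos _
  have hq1 : q < 1 := Real.exp_lt_one_iff.mpr (by linarith)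
  have hgeom : Summable (fun n : ℕ => (n : ℝ) ^ k * q ^ n) :=
    summable_pow_mul_geometric_of_norm_lt_one k (by rw [Real.norm_eq_abs, abs_of_pos hq0]; exact hq1)
  have hshift : Summable (fun n : ℕ => ((n + 1 : ℕ) : ℝ) ^ k * q ^ (n + 1)) :=
    (summable_nat_add_iff 1).mpr hgeom
  have hmaj : Summable (fun n : ℕ => (C * q⁻¹) * (((n + 1 : ℕ) : ℝ) ^ k * q ^ (n + 1))) :=
    hshift.mul_left _
  apply Summable.of_nonneg_of_le (fun n => by positivity) (fun n => ?_) hmaj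
  have hexp : Real.exp (-(r * n)) = q ^ n := by
    rw [hq, ← Real.exp_nat_mul]; ring_nf
  rw [hexp]
  have h1 : ‖c n‖ * q ^ n ≤ (C * (1 + n) ^ k) * q ^ n :=
    mul_le_mul_of_nonneg_right (hb n) (by positivity)
  calc ‖c n‖ * q ^ n ≤ (C * (1 + n) ^ k) * q ^ n := h1
    _ = (C * q⁻¹) * (((n + 1 : ℕ) : ℝ) ^ k * q ^ (n + 1)) := by
        push_cast
        rw [pow_succ]
        rw [show C * q⁻¹ * (((n:ℝ) + 1) ^ k * (q ^ n * q)) =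
          C * (((n:ℝ)+1)^k * q^n) * (q⁻¹ * q) from by ring,
          inv_mul_cancel₀ hq0.ne', mul_one]
        ring

lemma tail_int (N : ℕ) (hN : 1 ≤ N) {c : ℕ → ℂ} (hc : PolyGrowth c) (j : ℕ) :
    IntegrableOn (fun y : ℝ => (y : ℂ) ^ j *
      ∑' n : ℕ, c (n + 1) * (Real.exp (-(2 * Real.pi * (↑(n + 1) : ℕ) * y / N)) : ℂ))
      (Ioi 1) := by
  have hN0 : (0 : ℝ) < N := by exact_mod_cast hN
  have hbpos : 0 < Real.pi / N := by positivity
  -- summability of the norms for each y > 0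
  have hsum : ∀ y : ℝ, 0 < y →
      Summable (fun n : ℕ => ‖c n‖ * Real.exp (-(2 * Real.pi * n * y / N))) := by
    intro y hy
    apply (sumexp hc (r := 2 * Real.pi * y / N) (by positivity)).congr
    intro n
    rw [show -(2 * Real.pi * y / N * n) = -(2 * Real.pi * n * y / N) by ring]
  have hsumS : ∀ y : ℝ, 0 < y →
      Summable (fun n : ℕ => ‖c (n + 1)‖ * Real.exp (-(2 * Real.pi * (↑(n + 1) : ℕ) * y / N))) :=
    fun y hy => (summable_nat_add_iff 1).mpr (hsum y hy)
  have hnormterm : ∀ (n : ℕ) (y : ℝ),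
      ‖c n * (Real.exp (-(2 * Real.pi * n * y / N)) : ℂ)‖
        = ‖c n‖ * Real.exp (-(2 * Real.pi * n * y / N)) := by
    intro n y
    rw [norm_mul, Complex.norm_real, Real.norm_eq_abs, abs_of_pos (Real.exp_pos _)]
  have hsumC : ∀ y : ℝ, 0 < y →
      Summable (fun n : ℕ => c (n + 1) * (Real.exp (-(2 * Real.pi * (↑(n + 1) : ℕ) * y / N)) : ℂ)) := by
    intro y hy
    apply Summable.of_norm
    apply (hsumS y hy).congr
    intro n
    rw [hnormterm]
  -- the weight sequence and its sum
  have hw : Summable (fun n : ℕ => ‖c (n + 1)‖ * Real.exp (-(Real.pi * (↑(n + 1) : ℕ) / N))) := by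
    apply ((summable_nat_add_iff 1).mpr (sumexp hc (r := Real.pi / N) hbpos)).congr
    intro n
    rw [show -(Real.pi / N * (↑(n+1) : ℕ)) = -(Real.pi * (↑(n + 1) : ℕ) / N) by ring]
  set K : ℝ := ∑' n : ℕ, ‖c (n + 1)‖ * Real.exp (-(Real.pi * (↑(n + 1) : ℕ) / N)) with hK
  have hK0 : 0 ≤ K := tsum_nonneg (fun n => by positivity)
  -- dominating function
  have hD : IntegrableOn (fun y : ℝ => K * (y ^ ((j : ℝ)) * Real.exp (-(Real.pi / N) * y)))
      (Ioi 1) := by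
    have h1 : IntegrableOn (fun y : ℝ => y ^ ((j : ℝ)) * Real.exp (-(Real.pi / N) * y ^ (1 : ℝ)))
        (Ioi 0) :=
      integrableOn_rpow_mul_exp_neg_mul_rpow
        (lt_of_lt_of_le neg_one_lt_zero (Nat.cast_nonneg j)) one_pos hbpos
    have h2 : IntegrableOn (fun y : ℝ => K * (y ^ ((j : ℝ)) * Real.exp (-(Real.pi / N) * y ^ (1 : ℝ))))
        (Ioi 1) := (h1.mono_set (Ioi_subset_Ioi zero_le_one)).const_mul K
    apply h2.congr_fun ?_ measurableSet_Ioi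
    intro y hy
    simp only [Real.rpow_one]
  -- measurability
  have hmeas : AEStronglyMeasurable
      (fun y : ℝ => (y : ℂ) ^ j *
        ∑' n : ℕ, c (n + 1) * (Real.exp (-(2 * Real.pi * (↑(n + 1) : ℕ) * y / N)) : ℂ))
      (volume.restrict (Ioi 1)) := by
    apply AEStronglyMeasurable.mul
    · exact ((Complex.continuous_ofReal.pow j)).aestronglyMeasurable
    · apply aestronglyMeasurable_of_tendsto_ae (u := atTop)
        (f := fun (k : ℕ) (y : ℝ) => ∑ n ∈ Finset.range k,
          c (n + 1) * (Real.exp (-(2 * Real.pi * (↑(n + 1) : ℕ) * y / N)) : ℂ))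
      · intro k
        apply Continuous.aestronglyMeasurable
        apply continuous_finset_sum
        intro n _
        exact continuous_const.mul (Complex.continuous_ofReal.comp
          (Real.continuous_exp.comp
            (((continuous_const.mul continuous_id).div_const _).neg)))
      · rw [ae_restrict_iff' measurableSet_Ioi]
        filter_upwards with y hy
        exact (hsumC y (lt_trans one_pos hy)).hasSum.tendsto_sum_nat
  -- conclude by domination
  apply hD.integrable.mono hmeas
  rw [ae_restrict_iff' measurableSet_Ioi]
  filter_upwards with y hy
  have hy1 : (1 : ℝ) < y := hy
  have hy0 : (0 : ℝ) < y := lt_trans one_pos hy1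
  have hT : ‖∑' n : ℕ, c (n + 1) * (Real.exp (-(2 * Real.pi * (↑(n + 1) : ℕ) * y / N)) : ℂ)‖
      ≤ K * Real.exp (-(Real.pi / N) * y) := by
    have hnorm1 : ‖∑' n : ℕ, c (n + 1) * (Real.exp (-(2 * Real.pi * (↑(n + 1) : ℕ) * y / N)) : ℂ)‖
        ≤ ∑' n : ℕ, ‖c (n + 1)‖ * Real.exp (-(2 * Real.pi * (↑(n + 1) : ℕ) * y / N)) := by
      have := norm_tsum_le_tsum_norm (f := fun n : ℕ =>
        c (n + 1) * (Real.exp (-(2 * Real.pi * (↑(n + 1) : ℕ) * y / N)) : ℂ)) ?_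
      · apply this.trans_eq
        apply tsum_congr
        intro n
        rw [hnormterm]
      · apply ((hsumS y hy0).congr (fun n => (hnormterm _ _).symm))
    apply hnorm1.trans
    have hterm : ∀ n : ℕ,
        ‖c (n + 1)‖ * Real.exp (-(2 * Real.pi * (↑(n + 1) : ℕ) * y / N))
          ≤ (‖c (n + 1)‖ * Real.exp (-(Real.pi * (↑(n + 1) : ℕ) / N))) * Real.exp (-(Real.pi / N) * y) := by
      intro n
      rw [mul_assoc ‖c (n + 1)‖ _ _, ← Real.exp_add]
      apply mul_le_mul_of_nonneg_left _ (norm_nonneg _)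
      apply Real.exp_le_exp.mpr
      have hn1 : (1 : ℝ) ≤ ((n + 1 : ℕ) : ℝ) := by exact_mod_cast Nat.one_le_iff_ne_zero.mpr (Nat.succ_ne_zero n)
      rw [div_eq_mul_inv, div_eq_mul_inv, div_eq_mul_inv,
        show -(Real.pi * ((n+1:ℕ):ℝ) * (N:ℝ)⁻¹) + -(Real.pi * (N:ℝ)⁻¹) * y
          = (-(Real.pi * ((n+1:ℕ):ℝ)) + -(Real.pi * y)) * (N:ℝ)⁻¹ by ring,
        show -(2 * Real.pi * ((n+1:ℕ):ℝ) * y * (N:ℝ)⁻¹)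
          = (-(2 * Real.pi * ((n+1:ℕ):ℝ) * y)) * (N:ℝ)⁻¹ by ring]
      apply mul_le_mul_of_nonneg_right _ (by positivity)
      nlinarith [Real.pi_pos, mul_nonneg (sub_nonneg.mpr hn1) (sub_nonneg.mpr hy1.le),
        one_le_mul_of_one_le_of_one_le hn1 hy1.le]
    calc (∑' n : ℕ, ‖c (n + 1)‖ * Real.exp (-(2 * Real.pi * (↑(n + 1) : ℕ) * y / N)))
        ≤ ∑' n : ℕ, (‖c (n + 1)‖ * Real.exp (-(Real.pi * (↑(n + 1) : ℕ) / N))) * Real.exp (-(Real.pi / N) * y) :=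
          Summable.tsum_le_tsum hterm (hsumS y hy0) (hw.mul_right _)
      _ = K * Real.exp (-(Real.pi / N) * y) := tsum_mul_right
  rw [norm_mul, norm_pow, Complex.norm_real, Real.norm_eq_abs, abs_of_pos hy0,
    Real.norm_eq_abs, abs_of_nonneg (by positivity)]
  calc y ^ j * ‖∑' n : ℕ, c (n + 1) * (Real.exp (-(2 * Real.pi * (↑(n + 1) : ℕ) * y / N)) : ℂ)‖
      ≤ y ^ j * (K * Real.exp (-(Real.pi / N) * y)) :=
        mul_le_mul_of_nonneg_left hT (by positivity)
    _ = K * (y ^ ((j : ℝ)) * Real.exp (-(Real.pi / N) * y)) := by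
        rw [Real.rpow_natCast]; ring

lemma sumC {c : ℕ → ℂ} (hc : PolyGrowth c) {N : ℕ} (hN : 1 ≤ N) {y : ℝ} (hy : 0 < y) :
    Summable (fun n : ℕ => c n * (Real.exp (-(2 * Real.pi * n * y / N)) : ℂ)) := by
  have hN0 : (0 : ℝ) < N := by exact_mod_cast hN
  apply Summable.of_norm
  apply (sumexp hc (r := 2 * Real.pi * y / N) (by positivity)).congr
  intro n
  rw [norm_mul, Complex.norm_real, Real.norm_eq_abs, abs_of_pos (Real.exp_pos _),
    show -(2 * Real.pi * y / N * (n : ℝ)) = -(2 * Real.pi * n * y / N) by ring]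

lemma expSum_split (N : ℕ) (hN : 1 ≤ N) (J : ℕ) (c : ℕ → ℕ → ℂ)
    (hc : ∀ j, PolyGrowth (c j)) {y : ℝ} (hy : 0 < y) :
    expSum N J c y = (∑ j ∈ Finset.range (J + 1), c j 0 * (y : ℂ) ^ j)
      + ∑ j ∈ Finset.range (J + 1), (y : ℂ) ^ j *
          ∑' n : ℕ, c j (n + 1) * (Real.exp (-(2 * Real.pi * (↑(n + 1) : ℕ) * y / N)) : ℂ) := by
  rw [expSum, ← Finset.sum_add_distrib]
  apply Finset.sum_congr rfl
  intro j _
  rw [Summable.tsum_eq_zero_add (sumC (hc j) hN hy)]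
  have h0 : c j 0 * (Real.exp (-(2 * Real.pi * ((0 : ℕ) : ℝ) * y / N)) : ℂ) = c j 0 := by
    norm_num
  rw [h0, mul_add, mul_comm ((y : ℂ) ^ j) (c j 0)]

lemma polyA_iff (c : ℕ → ℂ) (J : ℕ) :
    IntegrableOn (fun y : ℝ => ∑ j ∈ Finset.range (J + 1), c j * (y : ℂ) ^ j) (Ioi 1)
      ↔ ∀ j ≤ J, c j = 0 := by
  constructor
  · intro h
    have h2 : IntegrableOn
        (fun y : ℝ => ∑ j ∈ Finset.range (J + 1), c j * (y : ℂ) ^ ((j : ℤ) + 0)) (Ioi 1) := by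
      apply h.congr_fun ?_ measurableSet_Ioi
      intro y _
      apply Finset.sum_congr rfl
      intro j _
      rw [add_zero, zpow_natCast]
    intro j hj
    exact laurent_zero (J + 1) c 0 (by norm_num) h2 j (Nat.lt_succ_of_le hj)
  · intro h
    apply (integrableOn_zero (s := Ioi (1 : ℝ))).congr_fun ?_ measurableSet_Ioi
    intro y _
    symm
    apply Finset.sum_eq_zero
    intro j hj
    rw [h j (Nat.lt_succ_iff.mp (Finset.mem_range.mp hj)), zero_mul]

lemma polyB_iff (c : ℕ → ℂ) (J : ℕ) :
    IntegrableOn (fun y : ℝ => ∑ j ∈ Finset.range (J + 1), c j * (y : ℂ) ^ ((j : ℤ) - 2))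
      (Ioi 1) ↔ ∀ j, 1 ≤ j → j ≤ J → c j = 0 := by
  have h2int : IntegrableOn (fun y : ℝ => c 0 * (y : ℂ) ^ (-2 : ℤ)) (Ioi 1) := by
    have base : IntegrableOn (fun x : ℝ => x ^ (-2 : ℝ)) (Ioi 1) :=
      (integrableOn_Ioi_rpow_iff one_pos).mpr (by norm_num)
    have base2 : IntegrableOn (fun x : ℝ => c 0 * ((x ^ (-2 : ℝ) : ℝ) : ℂ)) (Ioi 1) :=
      (base.ofReal (𝕜 := ℂ)).const_mul (c 0)
    apply base2.congr_fun ?_ measurableSet_Ioi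
    intro x hx
    have hx0 : (0 : ℝ) < x := lt_trans one_pos hx
    show c 0 * ((x ^ (-2 : ℝ) : ℝ) : ℂ) = c 0 * (x : ℂ) ^ (-2 : ℤ)
    congr 1
    rw [show (-2 : ℝ) = ((-2 : ℤ) : ℝ) by norm_num, Real.rpow_intCast, Complex.ofReal_zpow]
  constructor
  · intro h
    have hsub : IntegrableOn
        (fun y : ℝ => (∑ j ∈ Finset.range (J + 1), c j * (y : ℂ) ^ ((j : ℤ) - 2))
          - c 0 * (y : ℂ) ^ (-2 : ℤ)) (Ioi 1) := h.sub h2int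
    have h3 : IntegrableOn
        (fun y : ℝ => ∑ j ∈ Finset.range J, c (j + 1) * (y : ℂ) ^ ((j : ℤ) + (-1))) (Ioi 1) := by
      apply hsub.congr_fun ?_ measurableSet_Ioi
      intro y _
      simp only [Finset.sum_range_succ', Nat.cast_zero, zero_sub]
      rw [add_sub_cancel_right]
      apply Finset.sum_congr rfl
      intro j _
      congr 1
      push_cast
      ring
    intro j hj1 hjJ
    have := laurent_zero J (fun j => c (j + 1)) (-1) le_rfl h3 (j - 1) (by omega)
    simpa [Nat.sub_add_cancel hj1] using this
  · intro h
    apply h2int.congr_fun ?_ measurableSet_Ioi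
    intro y _
    show c 0 * (y : ℂ) ^ (-2 : ℤ) = ∑ j ∈ Finset.range (J + 1), c j * (y : ℂ) ^ ((j : ℤ) - 2)
    rw [Finset.sum_range_succ']
    have hz : ∀ j ∈ Finset.range J, c (j + 1) * (y : ℂ) ^ (((j + 1 : ℕ) : ℤ) - 2) = 0 := by
      intro j hj
      rw [h (j + 1) (Nat.le_add_left 1 j) (Nat.succ_le_of_lt (Finset.mem_range.mp hj)), zero_mul]
    rw [Finset.sum_eq_zero hz, zero_add, Nat.cast_zero, zero_sub]

end Aux

lemma int_add_iff {P E : ℝ → ℂ} {s : Set ℝ} (hs : MeasurableSet s) (hE : IntegrableOn E s) :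
    IntegrableOn (fun y => P y + E y) s ↔ IntegrableOn P s := by
  constructor
  · intro h
    have h2 : IntegrableOn (fun y => (P y + E y) - E y) s := h.sub hE
    apply h2.congr_fun ?_ hs
    intro y _
    simp
  · exact fun h => h.add hE

theorem memP_integrableOn_iff (N : ℕ) (hN : 1 ≤ N) (φ : ℝ → ℂ) (jI j0 : ℕ)
    (a b : ℕ → ℕ → ℂ) (ha : ∀ j, PolyGrowth (a j)) (hb : ∀ j, PolyGrowth (b j))
    (hφ : ∀ y : ℝ, 0 < y → φ y = expSum N jI a y)
    (hφ' : ∀ y : ℝ, 0 < y → φ (1 / y) = expSum N j0 b y) :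
    MeasureTheory.IntegrableOn φ (Set.Ioi (0 : ℝ)) ↔
      ((∀ j ≤ jI, a j 0 = 0) ∧ (∀ j, 1 ≤ j → j ≤ j0 → b j 0 = 0)) := by
  have hN0 : (0 : ℝ) < N := by exact_mod_cast hN
  have hEaInt : IntegrableOn (fun y : ℝ => ∑ j ∈ Finset.range (jI + 1), (y : ℂ) ^ j *
      ∑' n : ℕ, a j (n + 1) * (Real.exp (-(2 * Real.pi * (↑(n + 1) : ℕ) * y / N)) : ℂ))
      (Ioi 1) := integrable_finset_sum _ (fun j _ => tail_int N hN (ha j) j)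
  have hEbInt : IntegrableOn (fun y : ℝ => ∑ j ∈ Finset.range (j0 + 1), (y : ℂ) ^ j *
      ∑' n : ℕ, b j (n + 1) * (Real.exp (-(2 * Real.pi * (↑(n + 1) : ℕ) * y / N)) : ℂ))
      (Ioi 1) := integrable_finset_sum _ (fun j _ => tail_int N hN (hb j) j)
  have hIoo : IntegrableOn φ (Ioi (0 : ℝ)) ↔
      (IntegrableOn φ (Ioo 0 1) ∧ IntegrableOn φ (Ioi 1)) := by
    constructor
    · intro h
      exact ⟨h.mono_set (fun x hx => hx.1), h.mono_set (Ioi_subset_Ioi zero_le_one)⟩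
    · rintro ⟨h1, h2⟩
      have h3 := h1.union ((integrableOn_Ici_iff_integrableOn_Ioi).mpr h2)
      rwa [Ioo_union_Ici_eq_Ioi one_pos] at h3
  have hA : IntegrableOn φ (Ioi 1) ↔ ∀ j ≤ jI, a j 0 = 0 := by
    have e1 : IntegrableOn φ (Ioi 1) ↔ IntegrableOn (fun y : ℝ =>
        (∑ j ∈ Finset.range (jI + 1), a j 0 * (y : ℂ) ^ j) +
        ∑ j ∈ Finset.range (jI + 1), (y : ℂ) ^ j *
          ∑' n : ℕ, a j (n + 1) * (Real.exp (-(2 * Real.pi * (↑(n + 1) : ℕ) * y / N)) : ℂ))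
        (Ioi 1) := by
      apply integrableOn_congr_fun ?_ measurableSet_Ioi
      intro y hy
      have hy0 : (0 : ℝ) < y := lt_trans one_pos hy
      rw [hφ y hy0, expSum_split N hN jI a ha hy0]
    rw [e1, int_add_iff measurableSet_Ioi hEaInt]
    exact polyA_iff _ _
  have hB : IntegrableOn φ (Ioo 0 1) ↔ ∀ j, 1 ≤ j → j ≤ j0 → b j 0 = 0 := by
    have himg : (Inv.inv '' (Ioi (1 : ℝ))) = Ioo 0 1 := by
      ext x
      constructor
      · rintro ⟨y, hy, rfl⟩
        have hy1 : (1 : ℝ) < y := hy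
        have hy0 : (0 : ℝ) < y := lt_trans one_pos hy1
        constructor
        · exact inv_pos.mpr hy0
        · rw [inv_lt_one_iff₀]
          right
          exact hy1
      · intro hx
        refine ⟨x⁻¹, ?_, inv_inv x⟩
        rw [mem_Ioi, one_lt_inv_iff₀]
        exact ⟨hx.1, hx.2⟩
    have hderiv : ∀ x ∈ Ioi (1 : ℝ), HasDerivWithinAt Inv.inv (-(x ^ 2)⁻¹) (Ioi 1) x := by
      intro x hx
      exact (hasDerivAt_inv (ne_of_gt (lt_trans one_pos hx))).hasDerivWithinAt
    have hsub := integrableOn_image_iff_integrableOn_abs_deriv_smul measurableSet_Ioi hderiv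
      (fun p _ q _ h => inv_injective h) φ
    rw [himg] at hsub
    rw [hsub]
    have e1 : IntegrableOn (fun x : ℝ => |(-(x ^ 2)⁻¹ : ℝ)| • φ x⁻¹) (Ioi 1) ↔
        IntegrableOn (fun x : ℝ => ((x ^ 2)⁻¹ : ℝ) •
          ((∑ j ∈ Finset.range (j0 + 1), b j 0 * (x : ℂ) ^ j) +
          ∑ j ∈ Finset.range (j0 + 1), (x : ℂ) ^ j *
            ∑' n : ℕ, b j (n + 1) * (Real.exp (-(2 * Real.pi * (↑(n + 1) : ℕ) * x / N)) : ℂ)))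
        (Ioi 1) := by
      apply integrableOn_congr_fun ?_ measurableSet_Ioi
      intro x hx
      have hx0 : (0 : ℝ) < x := lt_trans one_pos hx
      have h1 : φ x⁻¹ = expSum N j0 b x := by
        rw [show x⁻¹ = 1 / x by rw [one_div]]
        exact hφ' x hx0
      show |(-(x ^ 2)⁻¹ : ℝ)| • φ x⁻¹ = _
      rw [h1, expSum_split N hN j0 b hb hx0, abs_neg, abs_inv, abs_of_pos (pow_pos hx0 2)]
    rw [e1]
    have hEb2 : IntegrableOn (fun x : ℝ => ((x ^ 2)⁻¹ : ℝ) •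
        ∑ j ∈ Finset.range (j0 + 1), (x : ℂ) ^ j *
          ∑' n : ℕ, b j (n + 1) * (Real.exp (-(2 * Real.pi * (↑(n + 1) : ℕ) * x / N)) : ℂ))
        (Ioi 1) := by
      apply MeasureTheory.Integrable.mono hEbInt
      · exact (((measurable_id.pow_const 2).inv).aestronglyMeasurable).smul hEbInt.1
      · rw [ae_restrict_iff' measurableSet_Ioi]
        filter_upwards with x hx
        have hx1 : (1 : ℝ) < x := hx
        have hx0 : (0 : ℝ) < x := lt_trans one_pos hx1
        rw [norm_smul, Real.norm_eq_abs, abs_of_pos (inv_pos.mpr (pow_pos hx0 2))]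
        have hle : ((x ^ 2)⁻¹ : ℝ) ≤ 1 := by
          rw [inv_le_one_iff₀]
          right
          nlinarith
        nlinarith [norm_nonneg ((fun y : ℝ => ∑ j ∈ Finset.range (j0 + 1), (y : ℂ) ^ j *
          ∑' n : ℕ, b j (n + 1) * (Real.exp (-(2 * Real.pi * (↑(n + 1) : ℕ) * y / N)) : ℂ)) x)]
    have e2 : IntegrableOn (fun x : ℝ => ((x ^ 2)⁻¹ : ℝ) •
          ((∑ j ∈ Finset.range (j0 + 1), b j 0 * (x : ℂ) ^ j) +
          ∑ j ∈ Finset.range (j0 + 1), (x : ℂ) ^ j *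
            ∑' n : ℕ, b j (n + 1) * (Real.exp (-(2 * Real.pi * (↑(n + 1) : ℕ) * x / N)) : ℂ)))
        (Ioi 1) ↔ IntegrableOn (fun x : ℝ => ((x ^ 2)⁻¹ : ℝ) •
          (∑ j ∈ Finset.range (j0 + 1), b j 0 * (x : ℂ) ^ j)) (Ioi 1) := by
      rw [integrableOn_congr_fun (g := fun x : ℝ =>
        ((x ^ 2)⁻¹ : ℝ) • (∑ j ∈ Finset.range (j0 + 1), b j 0 * (x : ℂ) ^ j) +
        ((x ^ 2)⁻¹ : ℝ) • ∑ j ∈ Finset.range (j0 + 1), (x : ℂ) ^ j *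
          ∑' n : ℕ, b j (n + 1) * (Real.exp (-(2 * Real.pi * (↑(n + 1) : ℕ) * x / N)) : ℂ))
        (fun x _ => smul_add _ _ _) measurableSet_Ioi]
      exact int_add_iff measurableSet_Ioi hEb2
    rw [e2]
    have e3 : IntegrableOn (fun x : ℝ => ((x ^ 2)⁻¹ : ℝ) •
          (∑ j ∈ Finset.range (j0 + 1), b j 0 * (x : ℂ) ^ j)) (Ioi 1) ↔
        IntegrableOn (fun x : ℝ =>
          ∑ j ∈ Finset.range (j0 + 1), b j 0 * (x : ℂ) ^ ((j : ℤ) - 2)) (Ioi 1) := by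
      apply integrableOn_congr_fun ?_ measurableSet_Ioi
      intro x hx
      have hx0 : (0 : ℝ) < x := lt_trans one_pos hx
      have hxc : (x : ℂ) ≠ 0 := by exact_mod_cast hx0.ne'
      show ((x ^ 2)⁻¹ : ℝ) • (∑ j ∈ Finset.range (j0 + 1), b j 0 * (x : ℂ) ^ j) = _
      rw [Finset.smul_sum]
      apply Finset.sum_congr rfl
      intro j _
      have h2 : (x : ℂ) ^ (-2 : ℤ) = ((x : ℂ) ^ 2)⁻¹ := by
        rw [show (-2 : ℤ) = -((2 : ℕ) : ℤ) by norm_num, zpow_neg, zpow_natCast]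
      rw [Complex.real_smul, Complex.ofReal_inv, Complex.ofReal_pow,
        show ((j : ℤ) - 2) = (j : ℤ) + (-2 : ℤ) by ring, zpow_add₀ hxc, zpow_natCast, h2]
      ring
    rw [e3]
    exact polyB_iff _ _
  rw [hIoo, hA, hB]
  exact and_comm
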